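/- The following integral identity holds: ∫₀² (log(2/t) + t/2 − 1) · (1/2) e^{−t/2} dt = γ − e^{−1} + ∫₁^∞ e^{−t}/t dt, where γ is the Euler–Mascheroni constant. (Here (1/2)e^{−t/2} on (0,∞) is the density of the chi-squared distribution with 2 degrees of freedom.) -/

import Mathlib

open Real MeasureTheory Set Filter intervalIntegral

-- Step A: integrability of log t * exp (-t) on (0,1]
lemma int01 : IntegrableOn (fun t : ℝ => Real.log t * Real.exp (-t)) (Ioc 0 1) := by
  have hbig : IntervalIntegrable (fun t : ℝ => 2 * t ^ (-(1:ℝ)/2)) volume 0 1 :=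
    (intervalIntegrable_rpow' (by norm_num)).const_mul 2
  have h : IntervalIntegrable (fun t : ℝ => Real.log t * Real.exp (-t)) volume 0 1 := by
    apply IntervalIntegrable.mono_fun' hbig
    · exact ((measurable_log.mul (measurable_exp.comp measurable_neg))).aestronglyMeasurable
    · rw [Filter.EventuallyLE, ae_restrict_iff' measurableSet_uIoc]
      filter_upwards with t ht
      rw [Set.uIoc_of_le (by norm_num : (0:ℝ) ≤ 1)] at ht
      obtain ⟨ht0, ht1⟩ := ht
      have h1 : |Real.log t| = -Real.log t := abs_of_nonpos (Real.log_nonpos (le_of_lt ht0) ht1)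
      have h2 : -Real.log t ≤ 2 * t ^ (-(1:ℝ)/2) := by
        have hrp : Real.log (t ^ (-(1:ℝ)/2)) = (-(1:ℝ)/2) * Real.log t := Real.log_rpow ht0 _
        have hle : Real.log (t ^ (-(1:ℝ)/2)) ≤ t ^ (-(1:ℝ)/2) - 1 :=
          Real.log_le_sub_one_of_pos (Real.rpow_pos_of_pos ht0 _)
        nlinarith [Real.rpow_pos_of_pos ht0 (-(1:ℝ)/2)]
      calc ‖Real.log t * Real.exp (-t)‖ = |Real.log t| * Real.exp (-t) := by
            rw [norm_mul, Real.norm_eq_abs, Real.norm_eq_abs, abs_of_pos (Real.exp_pos _)]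
        _ ≤ (2 * t ^ (-(1:ℝ)/2)) * 1 := by
            apply mul_le_mul (h1 ▸ h2) (Real.exp_le_one_iff.mpr (by linarith)) (Real.exp_pos _).le
            positivity
        _ = 2 * t ^ (-(1:ℝ)/2) := mul_one _
  simpa [intervalIntegrable_iff, Set.uIoc_of_le (by norm_num : (0:ℝ) ≤ 1)] using h

lemma int1i : IntegrableOn (fun t : ℝ => Real.log t * Real.exp (-t)) (Ioi 1) := by
  have hg : IntegrableOn (fun t : ℝ => Real.exp (-t) * t ^ ((2:ℝ) - 1)) (Ioi 1) :=
    (Real.GammaIntegral_convergent (by norm_num : (0:ℝ) < 2)).mono_set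
      (Ioi_subset_Ioi (by norm_num))
  apply Integrable.mono hg
  · exact ((measurable_log.mul (measurable_exp.comp measurable_neg))).aestronglyMeasurable
  · rw [ae_restrict_iff' measurableSet_Ioi]
    filter_upwards with t ht
    have ht1 : (1:ℝ) < t := ht
    have h0 : (0:ℝ) < t := by linarith
    have hl0 : 0 ≤ Real.log t := Real.log_nonneg ht1.le
    have hlt : Real.log t ≤ t := (Real.log_le_sub_one_of_pos h0).trans (by linarith)
    rw [Real.norm_eq_abs, Real.norm_eq_abs, abs_mul, abs_of_nonneg hl0,
      abs_of_pos (Real.exp_pos _), abs_of_nonneg (by positivity)]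
    have h21 : (t:ℝ) ^ ((2:ℝ) - 1) = t := by
      norm_num
    rw [h21, mul_comm (Real.exp (-t)) t]
    exact mul_le_mul_of_nonneg_right hlt (Real.exp_pos _).le

lemma intE1 : IntegrableOn (fun t : ℝ => Real.exp (-t) / t) (Ioi 1) := by
  apply Integrable.mono (exp_neg_integrableOn_Ioi 1 one_pos)
  · exact ((measurable_exp.comp measurable_neg).div measurable_id).aestronglyMeasurable
  · rw [ae_restrict_iff' measurableSet_Ioi]
    filter_upwards with t ht
    have ht1 : (1:ℝ) < t := ht
    have : (-1:ℝ) * t = -t := by ring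
    rw [this, Real.norm_eq_abs, Real.norm_eq_abs, abs_div, abs_of_pos (Real.exp_pos _),
      abs_of_pos (by linarith : (0:ℝ) < t)]
    exact div_le_self (Real.exp_pos _).le ht1.le

lemma ibp : ∫ t in Ioi (1:ℝ), Real.log t * Real.exp (-t) = ∫ t in Ioi (1:ℝ), Real.exp (-t) / t := by
  have key : ∫ t in Ioi (1:ℝ),
      (Real.log t * Real.exp (-t) - Real.exp (-t) / t) = 0 - -(Real.log 1 * Real.exp (-1)) := by
    apply integral_Ioi_of_hasDerivAt_of_tendsto
      (f := fun t => -(Real.log t * Real.exp (-t)))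
    · exact (((Real.continuousAt_log one_ne_zero).mul
        ((Real.continuous_exp.comp continuous_neg).continuousAt)).neg).continuousWithinAt
    · intro x hx
      have hx0 : (0:ℝ) < x := lt_trans one_pos hx
      have he : HasDerivAt (fun t : ℝ => Real.exp (-t)) (Real.exp (-x) * -1) x :=
        (Real.hasDerivAt_exp (-x)).comp x (hasDerivAt_neg x)
      have h1 : HasDerivAt (fun t : ℝ => Real.log t * Real.exp (-t))
          (x⁻¹ * Real.exp (-x) + Real.log x * (Real.exp (-x) * -1)) x :=
        (Real.hasDerivAt_log hx0.ne').mul he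
      convert h1.neg using 1
      · rfl
      · ring
    · exact (int1i.sub intE1)
    · rw [show (0:ℝ) = -0 by ring]
      apply Tendsto.neg
      apply squeeze_zero' (g := fun t : ℝ => t * Real.exp (-t))
      · filter_upwards [Filter.eventually_ge_atTop (1:ℝ)] with t ht
        have := Real.log_nonneg ht
        positivity
      · filter_upwards [Filter.eventually_gt_atTop (0:ℝ)] with t ht
        exact mul_le_mul_of_nonneg_right
          ((Real.log_le_sub_one_of_pos ht).trans (by linarith)) (Real.exp_pos _).le
      · simpa using tendsto_pow_mul_exp_neg_atTop_nhds_zero 1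
  rw [MeasureTheory.integral_sub int1i intE1] at key
  simp at key
  linarith

lemma gammaA : Real.eulerMascheroniConstant = -∫ t in Ioi (0:ℝ), Real.log t * Real.exp (-t) := by
  set A : ℝ := ∫ t in Ioi (0:ℝ), Real.log t * Real.exp (-t) with hA
  have hc : HasDerivAt Complex.GammaIntegral
      (∫ t : ℝ in Ioi 0, (t : ℂ) ^ ((1:ℂ) - 1) * (Real.log t * Real.exp (-t))) 1 :=
    Complex.hasDerivAt_GammaIntegral (by simp)
  have hval : (∫ t : ℝ in Ioi 0, (t : ℂ) ^ ((1:ℂ) - 1) * (Real.log t * Real.exp (-t))) = (A : ℂ) := by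
    have h1 : (∫ t : ℝ in Ioi 0, (t : ℂ) ^ ((1:ℂ) - 1) * (Real.log t * Real.exp (-t)))
        = ∫ t : ℝ in Ioi (0:ℝ), ((Real.log t * Real.exp (-t) : ℝ) : ℂ) := by
      apply setIntegral_congr_fun measurableSet_Ioi
      intro t _
      simp [Complex.ofReal_mul]
    rw [h1, hA]
    exact _root_.integral_ofReal
  rw [hval] at hc
  have heq : Complex.Gamma =ᶠ[nhds (1:ℂ)] Complex.GammaIntegral := by
    have hopen : IsOpen {s : ℂ | 0 < s.re} := isOpen_lt continuous_const Complex.continuous_re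
    filter_upwards [hopen.mem_nhds (by simp : (1:ℂ) ∈ {s : ℂ | 0 < s.re})] with s hs
    exact Complex.Gamma_eq_integral hs
  have hG : HasDerivAt Complex.Gamma (A : ℂ) 1 := hc.congr_of_eventuallyEq heq
  have hR : HasDerivAt Real.Gamma A 1 := by
    have := (Complex.ofReal_one ▸ hG).real_of_complex
    simpa [Complex.Gamma_ofReal] using this
  rw [Real.eulerMascheroniConstant_eq_neg_deriv, hR.deriv]

lemma split : (∫ t in Ioi (0:ℝ), Real.log t * Real.exp (-t)) =
    (∫ t in Ioc (0:ℝ) 1, Real.log t * Real.exp (-t)) +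
    (∫ t in Ioi (1:ℝ), Real.log t * Real.exp (-t)) := by
  rw [← setIntegral_union (Ioc_disjoint_Ioi le_rfl) measurableSet_Ioi int01 int1i,
    Ioc_union_Ioi_eq_Ioi zero_le_one]

/-- High-SNR saturation value of the element-wise GNNDR GMI on the block noncoherent AWGN
channel: `∫₀² (log (2/t) + t/2 - 1) · (1/2) e^{-t/2} dt = γ - e⁻¹ + E₁(1)`, where `γ` is the
Euler–Mascheroni constant and `E₁(1) = ∫₁^∞ e^{-t}/t dt`. -/
theorem elementwise_gmi_saturation :
    ∫ t in (0:ℝ)..2, (Real.log (2 / t) + t / 2 - 1) * ((1 / 2) * Real.exp (-t / 2)) =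
      Real.eulerMascheroniConstant - Real.exp (-1) +
        ∫ t in Set.Ioi (1:ℝ), Real.exp (-t) / t := by
  set g : ℝ → ℝ := fun t => (Real.log (2 / t) + t / 2 - 1) * ((1 / 2) * Real.exp (-t / 2)) with hg
  have hsub : (∫ t in (0:ℝ)..2, g t) = ∫ u in (0:ℝ)..1, (-Real.log u + u - 1) * Real.exp (-u) := by
    have h : (2:ℝ) • ∫ u in (0:ℝ)..1, g (2*u) = ∫ t in (2*0:ℝ)..(2*1), g t :=
      intervalIntegral.smul_integral_comp_mul_left g 2
    rw [show (2:ℝ)*0 = 0 by norm_num, show (2:ℝ)*1 = 2 by norm_num] at h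
    rw [← h, smul_eq_mul, ← intervalIntegral.integral_const_mul]
    apply intervalIntegral.integral_congr
    intro u _
    have h2u : (2:ℝ) / (2 * u) = 1 / u := by
      rw [show (2:ℝ) / (2 * u) = 2 * 1 / (2 * u) by norm_num, mul_div_mul_left 1 u two_ne_zero]
    have hexp : -(2 * u) / 2 = -u := by ring
    simp only [hg, h2u, hexp, one_div, Real.log_inv]
    ring
  have hint1 : IntervalIntegrable (fun u : ℝ => -Real.log u * Real.exp (-u)) volume 0 1 := by
    rw [intervalIntegrable_iff, Set.uIoc_of_le zero_le_one]
    exact int01.neg.congr (Filter.Eventually.of_forall fun x => by simp [neg_mul])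
  have hint2 : IntervalIntegrable (fun u : ℝ => (u - 1) * Real.exp (-u)) volume 0 1 :=
    (Continuous.intervalIntegrable (by continuity) 0 1)
  have hsplit2 : (∫ u in (0:ℝ)..1, (-Real.log u + u - 1) * Real.exp (-u)) =
      (∫ u in (0:ℝ)..1, -Real.log u * Real.exp (-u)) +
      (∫ u in (0:ℝ)..1, (u - 1) * Real.exp (-u)) := by
    rw [← intervalIntegral.integral_add hint1 hint2]
    apply intervalIntegral.integral_congr
    intro u _
    ring
  have hpiece2 : (∫ u in (0:ℝ)..1, (u - 1) * Real.exp (-u)) = -Real.exp (-1) := by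
    have hft : ∀ u ∈ Set.uIcc (0:ℝ) 1, HasDerivAt (fun v : ℝ => -v * Real.exp (-v))
        ((u - 1) * Real.exp (-u)) u := by
      intro u _
      have he : HasDerivAt (fun v : ℝ => Real.exp (-v)) (Real.exp (-u) * -1) u :=
        (Real.hasDerivAt_exp (-u)).comp u (hasDerivAt_neg u)
      have := (hasDerivAt_neg u).mul he
      convert this using 1
      · rfl
      · rfl
      · rfl
      · ring
    rw [intervalIntegral.integral_eq_sub_of_hasDerivAt hft hint2]
    norm_num
  have hpiece1 : (∫ u in (0:ℝ)..1, -Real.log u * Real.exp (-u)) =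
      Real.eulerMascheroniConstant + ∫ t in Set.Ioi (1:ℝ), Real.exp (-t) / t := by
    have h1 : (∫ u in (0:ℝ)..1, -Real.log u * Real.exp (-u)) =
        -∫ u in Ioc (0:ℝ) 1, Real.log u * Real.exp (-u) := by
      rw [intervalIntegral.integral_of_le zero_le_one, ← MeasureTheory.integral_neg]
      apply setIntegral_congr_fun measurableSet_Ioc
      intro u _
      ring
    rw [h1]
    have := split
    have hg2 := gammaA
    rw [ibp] at this
    linarith
  rw [hsub, hsplit2, hpiece1, hpiece2]
  ring
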